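/- Let q > 0, set c(q) = (cosh q − 1)/(cosh q + 1), and let 1 ≤ ξ ≤ 1/c(q). Define W_ξ : ℝ → ℝ by W_ξ(x) = max(x,0) + ξ·max(−x,0). Let α, β be nonzero real numbers with |α| ≤ q and |β| ≤ q, and assume either (α < 0 and β < 0) or α·β < 0. If ε₁, ε₂ ∈ ℝ satisfy ε₂ − ε₁ = α + β and h(ε₁) + h(ε₂) = h(α) + h(β), then W_ξ(ε₁) + W_ξ(ε₂) + (ξ − 1)·|ε₁| ≤ W_ξ(α) + W_ξ(β). -/

import Mathlib

/-- The function `h` used to parametrize rarefaction (`ε ≥ 0`) and shock (`ε < 0`)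
branches of the wave curves of the isothermal p-system. -/
noncomputable def waveH (ε : ℝ) : ℝ := if 0 ≤ ε then ε else Real.sinh ε

/-- Weighted strength: weight `1` for rarefactions (positive part) and
weight `ξ` for shocks (negative part). -/
noncomputable def weightedStrength (ξ x : ℝ) : ℝ := max x 0 + ξ * max (-x) 0


open Set in

lemma sinh_le_mul_cosh {t : ℝ} (ht : 0 ≤ t) : Real.sinh t ≤ t * Real.cosh t := by
  have hder : ∀ s : ℝ, HasDerivAt (fun u : ℝ => u * Real.cosh u - Real.sinh u)
      (s * Real.sinh s) s := by
    intro s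
    have h := ((hasDerivAt_id s).mul (Real.hasDerivAt_cosh s)).sub (Real.hasDerivAt_sinh s)
    have e : (fun u : ℝ => u * Real.cosh u - Real.sinh u) = id * Real.cosh - Real.sinh := rfl
    rw [e]
    refine h.congr_deriv ?_
    show 1 * Real.cosh s + s * Real.sinh s - Real.cosh s = s * Real.sinh s
    ring
  have hmono : MonotoneOn (fun s : ℝ => s * Real.cosh s - Real.sinh s) (Set.Ici 0) := by
    apply monotoneOn_of_deriv_nonneg (convex_Ici 0)
    · exact Continuous.continuousOn (by continuity)
    · intro x _
      exact (hder x).differentiableAt.differentiableWithinAt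
    · intro x hx
      rw [(hder x).deriv]
      rw [interior_Ici, mem_Ioi] at hx
      exact mul_nonneg hx.le (Real.sinh_nonneg_iff.2 hx.le)
  have h0 : (0:ℝ) ∈ Set.Ici (0:ℝ) := Set.self_mem_Ici
  have := hmono h0 (Set.mem_Ici.2 ht) ht
  simpa using this

lemma le_sinh_sub {x y : ℝ} (h : y ≤ x) : x - y ≤ Real.sinh x - Real.sinh y := by
  have := Real.sinh_sub_id_strictMono.monotone h
  linarith

lemma sinh_sub_le {x y : ℝ} (h : y ≤ x) :
    Real.sinh x - Real.sinh y ≤ (x - y) * (Real.cosh x + Real.cosh y) / 2 := by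
  have A := Real.sinh_add ((x+y)/2) ((x-y)/2)
  have B := Real.sinh_sub ((x+y)/2) ((x-y)/2)
  have A' := Real.cosh_add ((x+y)/2) ((x-y)/2)
  have B' := Real.cosh_sub ((x+y)/2) ((x-y)/2)
  simp only [show (x+y)/2 + (x-y)/2 = x by ring, show (x+y)/2 - (x-y)/2 = y by ring] at A B A' B'
  have h1 : Real.sinh x - Real.sinh y
      = 2 * Real.cosh ((x+y)/2) * Real.sinh ((x-y)/2) := by linear_combination A - B
  have h2 : Real.cosh x + Real.cosh y
      = 2 * Real.cosh ((x+y)/2) * Real.cosh ((x-y)/2) := by linear_combination A' + B'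
  rw [h1, h2]
  have hs : Real.sinh ((x-y)/2) ≤ ((x-y)/2) * Real.cosh ((x-y)/2) :=
    sinh_le_mul_cosh (by linarith)
  have hca : 0 < Real.cosh ((x+y)/2) := Real.cosh_pos _
  nlinarith [mul_le_mul_of_nonneg_left hs hca.le]

lemma waveH_of_nonneg {x : ℝ} (h : 0 ≤ x) : waveH x = x := if_pos h

lemma waveH_of_nonpos {x : ℝ} (h : x ≤ 0) : waveH x = Real.sinh x := by
  unfold waveH
  split_ifs with h'
  · have : x = 0 := le_antisymm h h'
    simp [this]
  · rfl

lemma ws_of_nonneg {ξ x : ℝ} (h : 0 ≤ x) : weightedStrength ξ x = x := by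
  simp [weightedStrength, max_eq_left h, max_eq_right (neg_nonpos.2 h)]

lemma ws_of_nonpos {ξ x : ℝ} (h : x ≤ 0) : weightedStrength ξ x = ξ * (-x) := by
  simp [weightedStrength, max_eq_right h, max_eq_left (neg_nonneg.2 h)]

/-- Mixed case: rarefaction `α > 0` meets shock `β < 0`. -/
lemma key_mixed (q ξ α β ε₁ ε₂ : ℝ) (hq : 0 < q)
    (hξ1 : 1 ≤ ξ) (hξq : ξ * (Real.cosh q - 1) ≤ Real.cosh q + 1)
    (hα : 0 < α) (hβ : β < 0) (hαq : α ≤ q) (hβq : -q ≤ β)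
    (h1 : ε₂ - ε₁ = α + β)
    (h2 : waveH ε₁ + waveH ε₂ = waveH α + waveH β) :
    weightedStrength ξ ε₁ + weightedStrength ξ ε₂ + (ξ - 1) * |ε₁| ≤
      weightedStrength ξ α + weightedStrength ξ β := by
  rw [waveH_of_nonneg hα.le, waveH_of_nonpos hβ.le] at h2
  have hsβ : Real.sinh β ≤ β := Real.sinh_le_self_iff.2 hβ.le
  have hcoshq : 1 < Real.cosh q := Real.one_lt_cosh.2 hq.ne'
  -- Step 1: ε₁ ≤ 0
  have hε₁ : ε₁ ≤ 0 := by
    by_contra hpos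
    push_neg at hpos
    rw [waveH_of_nonneg hpos.le] at h2
    rcases le_or_gt 0 ε₂ with h₂ | h₂
    · rw [waveH_of_nonneg h₂] at h2
      -- 2ε₁ = sinh β - β < 0
      have hsβ' : Real.sinh β < β := by
        have h := Real.self_lt_sinh_iff.2 (neg_pos.2 hβ)
        rw [Real.sinh_neg] at h
        linarith
      linarith
    · rw [waveH_of_nonpos h₂.le] at h2
      have hab : α + β < 0 := by linarith
      have l1 : ε₂ - (α + β) ≤ Real.sinh ε₂ - Real.sinh (α + β) :=
        le_sinh_sub (by linarith)
      have l2 : (α + β) - β ≤ Real.sinh (α + β) - Real.sinh β :=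
        le_sinh_sub (by linarith)
      linarith
  rw [waveH_of_nonpos hε₁] at h2
  have hsε₁ : Real.sinh ε₁ ≤ ε₁ := Real.sinh_le_self_iff.2 hε₁
  have habs : |ε₁| = -ε₁ := abs_of_nonpos hε₁
  have hcoshβ : Real.cosh β ≤ Real.cosh q := by
    rw [Real.cosh_le_cosh]
    rw [abs_of_nonpos hβ.le, abs_of_pos hq]
    linarith
  rcases le_or_gt 0 ε₂ with h₂ | h₂
  · -- transmitted rarefaction
    rw [waveH_of_nonneg h₂] at h2
    -- sinh ε₁ + ε₁ = sinh β - β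
    have heq : Real.sinh ε₁ + ε₁ = Real.sinh β - β := by linarith
    -- bound: 4 * (-ε₁) ≤ (-β) * (cosh β - 1)
    have hb : Real.sinh 0 - Real.sinh β ≤ (0 - β) * (Real.cosh 0 + Real.cosh β) / 2 :=
      sinh_sub_le hβ.le
    rw [Real.sinh_zero, Real.cosh_zero] at hb
    have hbound : 4 * (-ε₁) ≤ (-β) * (Real.cosh β - 1) := by nlinarith
    rw [ws_of_nonpos hε₁, ws_of_nonneg h₂, ws_of_nonneg hα.le, ws_of_nonpos hβ.le, habs]
    have hxi2 : (ξ - 1) * (Real.cosh q - 1) ≤ 2 := by nlinarith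
    -- goal reduces to 2(ξ-1)(-ε₁) ≤ (ξ+1)(-β)
    nlinarith [mul_le_mul_of_nonneg_left hbound (by linarith : (0:ℝ) ≤ ξ - 1),
      mul_le_mul_of_nonneg_right hxi2 (by linarith : (0:ℝ) ≤ -β),
      mul_le_mul_of_nonneg_left hcoshβ
        (mul_nonneg (by linarith : (0:ℝ) ≤ ξ-1) (by linarith : (0:ℝ) ≤ -β))]
  · -- transmitted shock
    rw [waveH_of_nonpos h₂.le] at h2
    have hε₂β : β ≤ ε₂ := by
      rw [← Real.sinh_le_sinh]
      have : Real.sinh ε₁ ≤ 0 := by linarith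
      linarith
    have hcoshε₂ : Real.cosh ε₂ ≤ Real.cosh q := by
      rw [Real.cosh_le_cosh, abs_of_pos hq, abs_of_nonpos h₂.le]
      linarith
    have hub : Real.sinh ε₂ - Real.sinh β ≤ (ε₂ - β) * (Real.cosh ε₂ + Real.cosh β) / 2 :=
      sinh_sub_le hε₂β
    -- α ≤ ε₁ + (α + ε₁) * C, C = (cosh ε₂ + cosh β)/2
    set C : ℝ := (Real.cosh ε₂ + Real.cosh β) / 2 with hC
    have hC1 : 1 ≤ C := by
      have := Real.one_le_cosh ε₂
      have := Real.one_le_cosh β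
      rw [hC]; linarith
    have hCq : C ≤ Real.cosh q := by rw [hC]; linarith
    have he2 : ε₂ - β = α + ε₁ := by linarith
    have hkey : α ≤ ε₁ + (α + ε₁) * C := by
      have h' : (α + ε₁) * C = (ε₂ - β) * (Real.cosh ε₂ + Real.cosh β) / 2 := by
        rw [hC, ← he2]; ring
      linarith [hub, h']
    -- derive (-ε₁)(cosh q + 1) ≤ α (cosh q - 1)
    have hmain : (-ε₁) * (Real.cosh q + 1) ≤ α * (Real.cosh q - 1) := by
      have hC0 : 0 < C + 1 := by linarith
      rw [← mul_le_mul_iff_of_pos_right hC0]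
      -- (-ε₁)(1+C) ≤ α(C-1)
      have base : (-ε₁) * (1 + C) ≤ α * (C - 1) := by nlinarith
      nlinarith
    rw [ws_of_nonpos hε₁, ws_of_nonpos h₂.le, ws_of_nonneg hα.le, ws_of_nonpos hβ.le, habs]
    -- goal reduces to (3ξ-1)(-ε₁) ≤ (ξ+1) α
    have hcq1 : 0 < Real.cosh q + 1 := by linarith
    nlinarith [mul_le_mul_of_nonneg_left hmain (by linarith : (0:ℝ) ≤ 3*ξ - 1),
      mul_le_mul_of_nonneg_left hξq (by linarith : (0:ℝ) ≤ 2*α),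
      mul_nonneg (by linarith : (0:ℝ) ≤ ξ - 1) (mul_nonneg hα.le (by linarith : (0:ℝ) ≤ Real.cosh q + 1))]

/-- Two shocks: `α < 0`, `β < 0`; here the weighted functional is conserved. -/
lemma key_shocks (ξ α β ε₁ ε₂ : ℝ) (hξ1 : 1 ≤ ξ) (hα : α < 0) (hβ : β < 0)
    (h1 : ε₂ - ε₁ = α + β)
    (h2 : waveH ε₁ + waveH ε₂ = waveH α + waveH β) :
    weightedStrength ξ ε₁ + weightedStrength ξ ε₂ + (ξ - 1) * |ε₁| ≤
      weightedStrength ξ α + weightedStrength ξ β := by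
  rw [waveH_of_nonpos hα.le, waveH_of_nonpos hβ.le] at h2
  have hsα : Real.sinh α < 0 := Real.sinh_neg_iff.2 hα
  have hsβ : Real.sinh β < 0 := Real.sinh_neg_iff.2 hβ
  have hsum : Real.sinh (α + β) < Real.sinh α + Real.sinh β := by
    have h := Real.sinh_add α β
    have t1 : Real.sinh α * (Real.cosh β - 1) < 0 :=
      mul_neg_of_neg_of_pos hsα (by linarith [Real.one_lt_cosh.2 hβ.ne])
    have t2 : Real.sinh β * (Real.cosh α - 1) < 0 :=
      mul_neg_of_neg_of_pos hsβ (by linarith [Real.one_lt_cosh.2 hα.ne])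
    nlinarith
  have hε₁pos : 0 < ε₁ := by
    by_contra h
    push_neg at h
    have hε₂ : ε₂ ≤ α + β := by linarith
    have w1 : Real.sinh ε₁ ≤ 0 := Real.sinh_nonpos_iff.2 h
    have w2 : Real.sinh ε₂ ≤ Real.sinh (α + β) := Real.sinh_le_sinh.2 hε₂
    rw [waveH_of_nonpos h, waveH_of_nonpos (hε₂.trans (by linarith))] at h2
    linarith
  have hε₂neg : ε₂ < 0 := by
    by_contra h
    push_neg at h
    rw [waveH_of_nonneg hε₁pos.le, waveH_of_nonneg h] at h2
    linarith
  rw [ws_of_nonneg hε₁pos.le, ws_of_nonpos hε₂neg.le, ws_of_nonpos hα.le,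
    ws_of_nonpos hβ.le, abs_of_pos hε₁pos]
  have hlin : ξ * (ε₁ - ε₂) = ξ * (-α) + ξ * (-β) := by linear_combination (-ξ) * h1
  linarith

/-- decay of the weighted functional `L_ξ` across any interaction
of two waves of the same family:
`W_ξ(ε₁) + W_ξ(ε₂) + (ξ−1)|ε₁| ≤ W_ξ(α) + W_ξ(β)` for
`1 ≤ ξ ≤ 1/c(q)`, `c(q) = (cosh q − 1)/(cosh q + 1)`. -/
theorem weighted_functional_decay (q ξ α β ε₁ ε₂ : ℝ) (hq : 0 < q)
    (hξ1 : 1 ≤ ξ) (hξ2 : ξ ≤ 1 / ((Real.cosh q - 1) / (Real.cosh q + 1)))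
    (hα : α ≠ 0) (hβ : β ≠ 0) (hαq : |α| ≤ q) (hβq : |β| ≤ q)
    (hsign : (α < 0 ∧ β < 0) ∨ α * β < 0)
    (h1 : ε₂ - ε₁ = α + β)
    (h2 : waveH ε₁ + waveH ε₂ = waveH α + waveH β) :
    weightedStrength ξ ε₁ + weightedStrength ξ ε₂ + (ξ - 1) * |ε₁| ≤
      weightedStrength ξ α + weightedStrength ξ β := by
  have hcoshq : 1 < Real.cosh q := Real.one_lt_cosh.2 hq.ne'
  have hq1 : (0:ℝ) < Real.cosh q + 1 := by linarith
  have hcpos : 0 < (Real.cosh q - 1) / (Real.cosh q + 1) :=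
    div_pos (by linarith) hq1
  have hξq : ξ * (Real.cosh q - 1) ≤ Real.cosh q + 1 := by
    have h := (le_div_iff₀ hcpos).1 hξ2
    rw [← mul_div_assoc] at h
    exact (div_le_one hq1).1 h
  rcases hsign with ⟨ha, hb⟩ | hab
  · exact key_shocks ξ α β ε₁ ε₂ hξ1 ha hb h1 h2
  · rcases mul_neg_iff.1 hab with ⟨ha, hb⟩ | ⟨ha, hb⟩
    · exact key_mixed q ξ α β ε₁ ε₂ hq hξ1 hξq ha hb (abs_le.1 hαq).2 (abs_le.1 hβq).1 h1 h2
    · have h1' : ε₂ - ε₁ = β + α := by linarith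
      have h2' : waveH ε₁ + waveH ε₂ = waveH β + waveH α := by linarith
      have := key_mixed q ξ β α ε₁ ε₂ hq hξ1 hξq hb ha (abs_le.1 hβq).2 (abs_le.1 hαq).1 h1' h2'
      linarith
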